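/- Let G be a finite simple graph. For every vertex v ∈ ker(G) there exists an inclusion-minimal independent set X with d(X) > 0 such that v ∈ X. -/

import Mathlib

open Finset

namespace CritGraph

variable {V : Type*} [Fintype V] [DecidableEq V]

/-- The neighborhood of a set of vertices `X`:
all vertices having at least one neighbor in `X`. -/
def nbhd (G : SimpleGraph V) [DecidableRel G.Adj] (X : Finset V) : Finset V :=
  univ.filter fun v => ∃ x ∈ X, G.Adj v x

/-- The difference `d(X) = |X| - |N(X)|` of a set of vertices `X`. -/
def diff (G : SimpleGraph V) [DecidableRel G.Adj] (X : Finset V) : ℤ :=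
  (X.card : ℤ) - ((nbhd G X).card : ℤ)

/-- A set of vertices is independent if no two of its vertices are adjacent. -/
def IsIndep (G : SimpleGraph V) (S : Finset V) : Prop :=
  ∀ u ∈ S, ∀ v ∈ S, ¬ G.Adj u v

instance (G : SimpleGraph V) [DecidableRel G.Adj] : DecidablePred (IsIndep G) := fun S =>
  inferInstanceAs (Decidable (∀ u ∈ S, ∀ v ∈ S, ¬ G.Adj u v))

/-- The critical difference `d_c(G) = max {d(X) : X ⊆ V}`. -/
def dC (G : SimpleGraph V) [DecidableRel G.Adj] : ℤ :=
  (univ : Finset V).powerset.sup' (Finset.powerset_nonempty _) (diff G)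

/-- The critical independence difference `id_c(G) = max {d(I) : I independent}`. -/
def idC (G : SimpleGraph V) [DecidableRel G.Adj] : ℤ :=
  ((univ : Finset V).powerset.filter (IsIndep G)).sup'
    ⟨∅, by simp [IsIndep]⟩ (diff G)

/-- `A` is a critical independent set: `A` is independent and
`d(A) = max {d(I) : I independent}`. -/
def IsCritIndep (G : SimpleGraph V) [DecidableRel G.Adj] (A : Finset V) : Prop :=
  IsIndep G A ∧ ∀ I : Finset V, IsIndep G I → diff G I ≤ diff G A

instance (G : SimpleGraph V) [DecidableRel G.Adj] : DecidablePred (IsCritIndep G) := fun A =>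
  inferInstanceAs (Decidable (IsIndep G A ∧ ∀ I : Finset V, IsIndep G I → diff G I ≤ diff G A))

/-- `ker(G)`: the intersection of all critical independent sets of `G`. -/
def kerG (G : SimpleGraph V) [DecidableRel G.Adj] : Finset V :=
  univ.filter fun v => ∀ A : Finset V, IsCritIndep G A → v ∈ A

/-- `G - v`: the induced subgraph of `G` on `V \ {v}`. -/
def deleteVert (G : SimpleGraph V) (v : V) : SimpleGraph {u : V // u ≠ v} :=
  G.comap Subtype.val

instance (G : SimpleGraph V) (v : V) [DecidableRel G.Adj] :
    DecidableRel (deleteVert G v).Adj := fun a b =>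
  inferInstanceAs (Decidable (G.Adj a.val b.val))

/-- `S` is an inclusion-minimal independent set with positive difference. -/
def MinPosIndep (G : SimpleGraph V) [DecidableRel G.Adj] (S : Finset V) : Prop :=
  IsIndep G S ∧ 0 < diff G S ∧ ∀ S' ⊂ S, ¬ (IsIndep G S' ∧ 0 < diff G S')

/-- `S` is a maximum independent set. -/
def IsMaxIndep (G : SimpleGraph V) (S : Finset V) : Prop :=
  IsIndep G S ∧ ∀ I : Finset V, IsIndep G I → I.card ≤ S.card

instance (G : SimpleGraph V) [DecidableRel G.Adj] : DecidablePred (IsMaxIndep G) := fun S =>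
  inferInstanceAs (Decidable (IsIndep G S ∧ ∀ I : Finset V, IsIndep G I → I.card ≤ S.card))

/-- `core(G)`: the intersection of all maximum independent sets of `G`. -/
def coreG (G : SimpleGraph V) [DecidableRel G.Adj] : Finset V :=
  univ.filter fun v => ∀ A : Finset V, IsMaxIndep G A → v ∈ A



lemma mem_nbhd {G : SimpleGraph V} [DecidableRel G.Adj] {X : Finset V} {w : V} :
    w ∈ nbhd G X ↔ ∃ x ∈ X, G.Adj w x := by simp [nbhd]

lemma nbhd_mono {G : SimpleGraph V} [DecidableRel G.Adj] {X Y : Finset V} (h : X ⊆ Y) :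
    nbhd G X ⊆ nbhd G Y := by
  intro w hw
  rw [mem_nbhd] at hw ⊢
  obtain ⟨x, hx, ha⟩ := hw
  exact ⟨x, h hx, ha⟩

lemma isIndep_subset {G : SimpleGraph V} {S T : Finset V} (h : IsIndep G T) (hs : S ⊆ T) :
    IsIndep G S := fun u hu w hw => h u (hs hu) w (hs hw)

/-- Every vertex of `ker(G)` lies in some inclusion-minimal independent set with
positive difference. -/
theorem mem_kerG_exists_minPosIndep (G : SimpleGraph V) [DecidableRel G.Adj]
    (v : V) (hv : v ∈ kerG G) :
    ∃ X : Finset V, MinPosIndep G X ∧ v ∈ X := by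
  classical
  simp only [kerG, mem_filter, mem_univ, true_and] at hv
  -- Step 1: some independent set has positive diff
  have hdiff_empty : diff G (∅ : Finset V) = 0 := by simp [diff, nbhd]
  have h0 : ∃ I : Finset V, IsIndep G I ∧ 0 < diff G I := by
    by_contra h
    push_neg at h
    have hce : IsCritIndep G (∅ : Finset V) := by
      refine ⟨fun u hu => absurd hu (by simp), fun I hI => ?_⟩
      rw [hdiff_empty]
      exact h I hI
    exact absurd (hv ∅ hce) (by simp)
  obtain ⟨I₀, hI₀i, hI₀d⟩ := h0
  -- Step 2: a critical set exists
  have hempty_mem : (∅ : Finset V) ∈ (univ : Finset V).powerset.filter (IsIndep G) := by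
    simp [IsIndep]
  have hcrit_ex : ∃ A : Finset V, IsCritIndep G A := by
    obtain ⟨A, hA, hAeq⟩ := Finset.exists_mem_eq_sup' ⟨∅, hempty_mem⟩ (diff G)
    refine ⟨A, (mem_filter.mp hA).2, fun I hI => ?_⟩
    rw [← hAeq]
    exact Finset.le_sup' (diff G) (mem_filter.mpr ⟨mem_powerset.mpr (subset_univ I), hI⟩)
  -- Step 3: a minimal critical set B
  obtain ⟨A₀, hA₀⟩ := hcrit_ex
  obtain ⟨B, hBmem, hBmin⟩ : ∃ B ∈ (univ : Finset V).powerset.filter (IsCritIndep G),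
      ∀ x ∈ (univ : Finset V).powerset.filter (IsCritIndep G), ¬ x < B := by
    obtain ⟨B, hB⟩ := Finset.exists_minimal (s := (univ : Finset V).powerset.filter (IsCritIndep G))
      ⟨A₀, mem_filter.mpr ⟨mem_powerset.mpr (subset_univ A₀), hA₀⟩⟩
    exact ⟨B, hB.1, fun x hx => hB.not_lt hx⟩
  have hBc : IsCritIndep G B := (mem_filter.mp hBmem).2
  have hvB : v ∈ B := hv B hBc
  have hBd : 0 < diff G B := lt_of_lt_of_le hI₀d (hBc.2 I₀ hI₀i)
  have hmin : ∀ C : Finset V, C ⊂ B → diff G C < diff G B := by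
    intro C hC
    by_contra h
    push_neg at h
    have hCc : IsCritIndep G C :=
      ⟨isIndep_subset hBc.1 hC.subset, fun I hI => le_trans (hBc.2 I hI) h⟩
    exact hBmin C (mem_filter.mpr ⟨mem_powerset.mpr (subset_univ C), hCc⟩) hC
  -- Step 4: surplus Hall condition
  have hsurplus : ∀ T : Finset V, T ⊆ nbhd G B → T.Nonempty →
      T.card + 1 ≤ (B.filter fun b => ∃ t ∈ T, G.Adj t b).card := by
    intro T hTR hTne
    set NBt := B.filter fun b => ∃ t ∈ T, G.Adj t b with hNBt
    have hNBtB : NBt ⊆ B := filter_subset _ _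
    have hNBt_ne : NBt.Nonempty := by
      obtain ⟨t₀, ht₀⟩ := hTne
      obtain ⟨x, hx, hadj⟩ := mem_nbhd.mp (hTR ht₀)
      exact ⟨x, mem_filter.mpr ⟨hx, t₀, ht₀, hadj⟩⟩
    have hCB : B \ NBt ⊂ B := Finset.sdiff_ssubset hNBtB hNBt_ne
    have h1 : diff G (B \ NBt) < diff G B := hmin _ hCB
    have h2 : nbhd G (B \ NBt) ⊆ nbhd G B \ T := by
      intro w hw
      obtain ⟨c, hc, hadj⟩ := mem_nbhd.mp hw
      rw [mem_sdiff]
      refine ⟨nbhd_mono (sdiff_subset) hw, fun hwT => ?_⟩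
      have : c ∈ NBt := mem_filter.mpr ⟨(mem_sdiff.mp hc).1, w, hwT, hadj⟩
      exact (mem_sdiff.mp hc).2 this
    have hc1 : (B \ NBt).card = B.card - NBt.card := card_sdiff_of_subset hNBtB
    have hc2 : (nbhd G (B \ NBt)).card ≤ (nbhd G B).card - T.card := by
      calc (nbhd G (B \ NBt)).card ≤ (nbhd G B \ T).card := card_le_card h2
        _ = (nbhd G B).card - T.card := card_sdiff_of_subset hTR
    have hNBtle : NBt.card ≤ B.card := card_le_card hNBtB
    have hTle : T.card ≤ (nbhd G B).card := card_le_card hTR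
    simp only [diff] at h1 hBd
    omega
  -- Step 5: Hall's theorem gives a matching from nbhd G B into B \ {v}
  have hall_cond : ∀ s : Finset {x // x ∈ nbhd G B},
      s.card ≤ (s.biUnion fun x => (B.erase v).filter fun b => G.Adj (x : V) b).card := by
    intro s
    rcases s.eq_empty_or_nonempty with rfl | hs
    · simp
    set T := s.image Subtype.val with hT
    have hTR : T ⊆ nbhd G B := by
      intro t ht
      rw [hT, mem_image] at ht
      obtain ⟨x, hx, hxe⟩ := ht
      exact hxe ▸ x.2
    have hTne : T.Nonempty := by rw [hT]; exact hs.image _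
    have hTcard : T.card = s.card := by
      rw [hT]; exact Finset.card_image_of_injective _ Subtype.val_injective
    have hsub : (B.filter fun b => ∃ t ∈ T, G.Adj t b).erase v ⊆
        s.biUnion fun x => (B.erase v).filter fun b => G.Adj (x : V) b := by
      intro b hb
      have hbne : b ≠ v := (mem_erase.mp hb).1
      obtain ⟨hbB, t, htT, hadj⟩ := mem_filter.mp (mem_erase.mp hb).2
      rw [hT, mem_image] at htT
      obtain ⟨x, hxs, rfl⟩ := htT
      exact mem_biUnion.mpr ⟨x, hxs, mem_filter.mpr ⟨mem_erase.mpr ⟨hbne, hbB⟩, hadj⟩⟩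
    have hsp := hsurplus T hTR hTne
    have herase : (B.filter fun b => ∃ t ∈ T, G.Adj t b).card - 1 ≤
        ((B.filter fun b => ∃ t ∈ T, G.Adj t b).erase v).card :=
      Finset.pred_card_le_card_erase
    have hfin := card_le_card hsub
    omega
  obtain ⟨f, hfinj, hf⟩ :=
    (Finset.all_card_le_biUnion_card_iff_exists_injective
      (fun x : {x // x ∈ nbhd G B} => (B.erase v).filter fun b => G.Adj (x : V) b)).mp hall_cond
  -- Step 6: the matching as a function g on V
  set g : V → V := fun w => if h : w ∈ nbhd G B then f ⟨w, h⟩ else w with hg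
  have hg1 : ∀ w ∈ nbhd G B, g w ∈ B.erase v ∧ G.Adj w (g w) := by
    intro w hw
    have := hf ⟨w, hw⟩
    rw [mem_filter] at this
    simp only [hg, dif_pos hw]
    exact this
  have hginj : ∀ w ∈ nbhd G B, ∀ w' ∈ nbhd G B, g w = g w' → w = w' := by
    intro w hw w' hw' heq
    simp only [hg, dif_pos hw, dif_pos hw'] at heq
    exact congrArg Subtype.val (hfinj heq)
  -- Step 7: the closure X of v under the matching
  set Closed : Finset V → Prop :=
    fun S => v ∈ S ∧ ∀ c ∈ S, ∀ w ∈ nbhd G B, G.Adj w c → g w ∈ S with hClosed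
  set X : Finset V := univ.filter (fun b => ∀ S : Finset V, Closed S → b ∈ S) with hX
  have hXmin : ∀ S : Finset V, Closed S → X ⊆ S := by
    intro S hS b hb
    exact (mem_filter.mp hb).2 S hS
  have hvX : v ∈ X := mem_filter.mpr ⟨mem_univ _, fun S hS => hS.1⟩
  have hXclosed : Closed X := by
    refine ⟨hvX, fun c hc w hw hadj => mem_filter.mpr ⟨mem_univ _, fun S hS => ?_⟩⟩
    exact hS.2 c ((mem_filter.mp hc).2 S hS) w hw hadj
  have hBclosed : Closed B :=
    ⟨hvB, fun c _ w hw _ => mem_of_mem_erase (hg1 w hw).1⟩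
  have hXB : X ⊆ B := hXmin B hBclosed
  have hnXR : nbhd G X ⊆ nbhd G B := nbhd_mono hXB
  have hsup : insert v ((nbhd G X).image g) ⊆ X := by
    intro b hb
    rcases mem_insert.mp hb with rfl | hb
    · exact hvX
    obtain ⟨w, hw, rfl⟩ := mem_image.mp hb
    obtain ⟨c, hc, hadj⟩ := mem_nbhd.mp hw
    exact hXclosed.2 c hc w (hnXR hw) hadj
  have hXeq : X = insert v ((nbhd G X).image g) := by
    apply Subset.antisymm _ hsup
    apply hXmin
    rw [hClosed]
    refine ⟨mem_insert_self _ _, fun c hc w hw hadj => ?_⟩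
    have hcX : c ∈ X := hsup hc
    have hwX : w ∈ nbhd G X := mem_nbhd.mpr ⟨c, hcX, hadj⟩
    exact mem_insert_of_mem (mem_image_of_mem g hwX)
  have hvnotim : v ∉ (nbhd G X).image g := by
    intro hmem
    obtain ⟨w, hw, hgw⟩ := mem_image.mp hmem
    exact (mem_erase.mp (hg1 w (hnXR hw)).1).1 hgw
  have himcard : ((nbhd G X).image g).card = (nbhd G X).card :=
    Finset.card_image_of_injOn (fun w hw w' hw' => hginj w (hnXR hw) w' (hnXR hw'))
  have hXcard : X.card = (nbhd G X).card + 1 := by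
    conv_lhs => rw [hXeq]
    rw [card_insert_of_notMem hvnotim, himcard]
  have hXd : 0 < diff G X := by
    simp only [diff]
    omega
  have hXindep : IsIndep G X := isIndep_subset hBc.1 hXB
  -- Step 8: minimality of X
  refine ⟨X, ⟨hXindep, hXd, ?_⟩, hvX⟩
  intro D hD hcon
  obtain ⟨hDi, hDd⟩ := hcon
  have hDX : D ⊆ X := hD.subset
  have hDn : nbhd G D ⊆ nbhd G X := nbhd_mono hDX
  have hkey : D.erase v ⊆ (nbhd G D).image g := by
    intro b hb
    have hbne : b ≠ v := (mem_erase.mp hb).1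
    have hbD : b ∈ D := mem_of_mem_erase hb
    have hbX : b ∈ X := hDX hbD
    rw [hXeq] at hbX
    rcases mem_insert.mp hbX with rfl | hbim
    · exact absurd rfl hbne
    obtain ⟨w, hw, rfl⟩ := mem_image.mp hbim
    have hadj : G.Adj w (g w) := (hg1 w (hnXR hw)).2
    exact mem_image_of_mem g (mem_nbhd.mpr ⟨g w, hbD, hadj⟩)
  have hDimcard : ((nbhd G D).image g).card = (nbhd G D).card :=
    Finset.card_image_of_injOn
      (fun w hw w' hw' => hginj w (hnXR (hDn hw)) w' (hnXR (hDn hw')))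
  simp only [diff] at hDd
  by_cases hvD : v ∈ D
  · -- D is closed, contradicting D ⊂ X
    have hecard : (D.erase v).card = D.card - 1 := card_erase_of_mem hvD
    have hle : (D.erase v).card ≤ ((nbhd G D).image g).card := card_le_card hkey
    have heq : D.erase v = (nbhd G D).image g := by
      apply Finset.eq_of_subset_of_card_le hkey
      omega
    have hDclosed : Closed D := by
      rw [hClosed]
      refine ⟨hvD, fun c hc w hw hadj => ?_⟩
      have hwD : w ∈ nbhd G D := mem_nbhd.mpr ⟨c, hc, hadj⟩
      have hgw : g w ∈ D.erase v := by rw [heq]; exact mem_image_of_mem g hwD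
      exact mem_of_mem_erase hgw
    exact hD.not_subset (hXmin D hDclosed)
  · have hDe : D.erase v = D := erase_eq_of_notMem hvD
    rw [hDe] at hkey
    have := card_le_card hkey
    omega

end CritGraph
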